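/- Let R be a Noetherian ring of prime characteristic p possessing a test element, M an R-module, I = (x_1, …, x_k) an ideal of R, z ∈ I* an element of the tight closure of I, and m ∈ M an element with x_i m ∈ 0*fg_M for all i = 1, …, k. Then z m ∈ 0*fg_M. Equivalently, for every ideal I, (0*fg_M :_M I*) = (0*fg_M :_M I). -/

import Mathlib

open scoped TensorProduct Pointwise

universe u v w

section TightClosureDefs

variable (R : Type u) [CommRing R] (p : ℕ)

/-- `R^o`: the complement of the union of the minimal primes of `R`. -/
def Ro : Set R := {c | ∀ P ∈ minimalPrimes R, c ∉ P}

/-- The Frobenius power `I^{[q]}` of an ideal: the ideal generated by the `q`-th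
powers of the elements of `I`. -/
def frobeniusPower (I : Ideal R) (q : ℕ) : Ideal R :=
  Ideal.span ((fun x => x ^ q) '' (I : Set R))

/-- The tight closure `I*` of an ideal `I`: all `x` such that `c x^q ∈ I^{[q]}` for some
`c ∈ R^o` and all `q = p^e ≫ 0`. -/
def idealTC (I : Ideal R) : Set R :=
  {x | ∃ c ∈ Ro R, ∃ e₀ : ℕ, ∀ e ≥ e₀, c * x ^ p ^ e ∈ frobeniusPower R I (p ^ e)}

/-- `R^e`: `R` viewed as an `R`-algebra via the `e`-th iterated Frobenius `r ↦ r^{p^e}`. -/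
def FrobAlg (R : Type u) [CommRing R] (_p _e : ℕ) : Type u := R

instance FrobAlg.instCommRing (e : ℕ) : CommRing (FrobAlg R p e) := inferInstanceAs (CommRing R)

noncomputable instance FrobAlg.instAlgebra (e : ℕ) [ExpChar R p] : Algebra R (FrobAlg R p e) :=
  (iterateFrobenius R p e).toAlgebra

/-- The identity map of `R` into `FrobAlg R p e`. -/
def FrobAlg.mk (e : ℕ) : R → FrobAlg R p e := id

variable [ExpChar R p]

/-- `N^{[p^e]}_M`: the image of `F^e(N) → F^e(M)`, where `F^e(M) = R^e ⊗_R M` is the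
`e`-th Frobenius functor. -/
noncomputable def submoduleFrobPow {M : Type v} [AddCommGroup M] [Module R M]
    (N : Submodule R M) (e : ℕ) : Submodule R (FrobAlg R p e ⊗[R] M) :=
  LinearMap.range (LinearMap.lTensor (FrobAlg R p e) N.subtype)

/-- The tight closure `N*_M` of a submodule `N ⊆ M`: all `m` such that
`c ⊗ m ∈ N^{[q]}_M` for some `c ∈ R^o` and all `q = p^e ≫ 0`. -/
noncomputable def moduleTC {M : Type v} [AddCommGroup M] [Module R M]
    (N : Submodule R M) : Set M :=
  {m | ∃ c ∈ Ro R, ∃ e₀ : ℕ, ∀ e ≥ e₀,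
    (FrobAlg.mk R p e c) ⊗ₜ[R] m ∈ submoduleFrobPow R p N e}

/-- The finitistic tight closure `N*fg_M`: the union of `(N ∩ M')*_{M'}` over all
finitely generated submodules `M' ⊆ M`. -/
noncomputable def finitisticTC {M : Type v} [AddCommGroup M] [Module R M]
    (N : Submodule R M) : Set M :=
  ⋃ (M' : Submodule R M) (_ : M'.FG),
    (M'.subtype '' moduleTC R p (N.comap M'.subtype))

/-- A test element: `c ∈ R^o` such that `c I* ⊆ I` for every ideal `I`. -/
def IsTestElement (c : R) : Prop :=
  c ∈ Ro R ∧ ∀ I : Ideal R, ∀ x ∈ idealTC R p I, c * x ∈ I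

/-- A module test element: `c ∈ R^o` such that for every finitely generated module `M`,
every submodule `N ⊆ M`, every `x ∈ N*_M` and every `q = p^e`, `c ⊗ x ∈ N^{[q]}_M`. -/
def IsModuleTestElement (c : R) : Prop :=
  c ∈ Ro R ∧ ∀ (M : Type u) [AddCommGroup M] [Module R M], Module.Finite R M →
    ∀ (N : Submodule R M), ∀ x ∈ moduleTC R p N, ∀ e : ℕ,
      (FrobAlg.mk R p e c) ⊗ₜ[R] x ∈ submoduleFrobPow R p N e

/-- The annihilator, inside the Matlis-type dual `Hom_R(M, E)`, of a subset `S ⊆ M`. -/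
def annihilatorIn {M : Type v} {E : Type w} [AddCommGroup M] [Module R M]
    [AddCommGroup E] [Module R E] (S : Set M) : Submodule R (M →ₗ[R] E) where
  carrier := {f | ∀ x ∈ S, f x = 0}
  add_mem' := by intro f g hf hg x hx; simp [hf x hx, hg x hx]
  zero_mem' := by intro x hx; simp
  smul_mem' := by intro r f hf x hx; simp [hf x hx]

/-- The product `s · T` of a set of ring elements and a submodule: the submodule
generated by all products `a • t` with `a ∈ s`, `t ∈ T`. -/
def setSMulSubmodule {M : Type v} [AddCommGroup M] [Module R M]
    (s : Set R) (T : Submodule R M) : Submodule R M :=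
  Submodule.span R (s • (T : Set M))

/-- `E` is an injective hull of `M` over `R`: `E` is an injective module admitting an
essential embedding of `M`. -/
def IsInjectiveHull (M : Type v) (E : Type w) [AddCommGroup M] [Module R M]
    [AddCommGroup E] [Module R E] : Prop :=
  Module.Injective R E ∧ ∃ ι : M →ₗ[R] E, Function.Injective ι ∧
    ∀ N : Submodule R E, N ≠ ⊥ → N ⊓ LinearMap.range ι ≠ ⊥

/-- The test ideal `τ(R) = ⋂_M Ann_R (0*_M)`, where `M` runs through all finitely
generated `R`-modules. -/
noncomputable def testIdeal : Ideal R where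
  carrier := {c | ∀ (M : Type u) [AddCommGroup M] [Module R M], Module.Finite R M →
    ∀ x ∈ moduleTC R p (⊥ : Submodule R M), c • x = 0}
  add_mem' := by
    intro a b ha hb M _ _ hfin x hx
    rw [add_smul, ha M hfin x hx, hb M hfin x hx, add_zero]
  zero_mem' := by intro M _ _ hfin x hx; rw [zero_smul]
  smul_mem' := by
    intro r a ha M _ _ hfin x hx
    rw [smul_eq_mul, mul_smul, ha M hfin x hx, smul_zero]

/-- An `F`-finite ring: `R` is finitely generated as a module over its subring of
`p`-th powers, i.e. `R^1` is a finite `R`-module. -/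
def IsFFinite : Prop := Module.Finite R (FrobAlg R p 1)

/-- An ideal generated by a system of parameters: generated by `dim R` elements and
with radical the maximal ideal (i.e. primary to the maximal ideal). -/
def IsParameterIdeal [IsLocalRing R] (I : Ideal R) : Prop :=
  ∃ (n : ℕ) (x : Fin n → R), ringKrullDim R = n ∧ I = Ideal.span (Set.range x) ∧
    I.radical = IsLocalRing.maximalIdeal R

/-- The parameter test ideal `τ_par(R) = ⋂_I (I : I*)`, where `I` runs through the
ideals generated by systems of parameters. -/
def parameterTestIdeal [IsLocalRing R] : Ideal R where
  carrier := {c | ∀ I : Ideal R, IsParameterIdeal R I → ∀ z ∈ idealTC R p I, c * z ∈ I}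
  add_mem' := by
    intro a b ha hb I hI z hz
    rw [add_mul]; exact I.add_mem (ha I hI z hz) (hb I hI z hz)
  zero_mem' := by intro I hI z hz; rw [zero_mul]; exact I.zero_mem
  smul_mem' := by
    intro r a ha I hI z hz
    rw [smul_eq_mul, mul_assoc]; exact I.mul_mem_left r (ha I hI z hz)

/-- A parameter test element: an element of `τ_par(R) ∩ R^o`. -/
def IsParameterTestElement [IsLocalRing R] (c : R) : Prop :=
  c ∈ parameterTestIdeal R p ∧ c ∈ Ro R

end TightClosureDefs

/-- A Cohen–Macaulay local ring: a local ring admitting a system of parameters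
(`dim R` elements generating an ideal whose radical is the maximal ideal, here expressed
as the Jacobson radical `(⊥).jacobson`) that is a regular sequence. -/
def IsCohenMacaulayLocalRing (R : Type u) [CommRing R] : Prop :=
  IsLocalRing R ∧ ∃ (n : ℕ) (x : Fin n → R), ringKrullDim R = n ∧
    (Ideal.span (Set.range x)).radical = (⊥ : Ideal R).jacobson ∧
    RingTheory.Sequence.IsRegular R (List.ofFn x)



section Helpers

variable {R : Type u} [CommRing R]

lemma Ro_one : (1 : R) ∈ Ro R := by
  intro P hP h1
  exact hP.1.1.ne_top ((Ideal.eq_top_iff_one P).mpr h1)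

lemma Ro_mul {c d : R} (hc : c ∈ Ro R) (hd : d ∈ Ro R) : c * d ∈ Ro R := by
  intro P hP hcd
  rcases hP.1.1.mem_or_mem hcd with h | h
  · exact hc P hP h
  · exact hd P hP h

lemma Ro_prod {ι : Type*} (s : Finset ι) (f : ι → R) (hf : ∀ i ∈ s, f i ∈ Ro R) :
    (∏ i ∈ s, f i) ∈ Ro R := by
  classical
  induction s using Finset.induction_on with
  | empty => simpa using Ro_one
  | insert a s hns ih =>
    rw [Finset.prod_insert hns]
    exact Ro_mul (hf a (Finset.mem_insert_self a s))
      (ih fun i hi => hf i (Finset.mem_insert_of_mem hi))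

variable {p : ℕ} [Fact p.Prime] [CharP R p]

lemma frobeniusPower_span_le {k : ℕ} (x : Fin k → R) (e : ℕ) :
    frobeniusPower R (Ideal.span (Set.range x)) (p ^ e) ≤
      Ideal.span (Set.range fun i => x i ^ p ^ e) := by
  haveI : ExpChar R p := ExpChar.prime Fact.out
  rw [frobeniusPower, Ideal.span_le]
  rintro _ ⟨y, hy, rfl⟩
  have h0 : (y : R) ^ p ^ e = iterateFrobenius R p e y := (iterateFrobenius_def p e y).symm
  have h2 : iterateFrobenius R p e y ∈
      Ideal.map (iterateFrobenius R p e) (Ideal.span (Set.range x)) :=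
    Ideal.mem_map_of_mem _ hy
  rw [Ideal.map_span] at h2
  have h3 : (iterateFrobenius R p e) '' Set.range x = Set.range fun i => x i ^ p ^ e := by
    rw [← Set.range_comp]
    refine congrArg Set.range (funext fun i => ?_)
    exact iterateFrobenius_def p e (x i)
  rw [h3] at h2
  simpa only [SetLike.mem_coe, h0] using h2

variable [ExpChar R p]

lemma submoduleFrobPow_bot {N : Type v} [AddCommGroup N] [Module R N] (e : ℕ) :
    submoduleFrobPow R p (⊥ : Submodule R N) e = ⊥ := by
  have h : (⊥ : Submodule R N).subtype = 0 := by
    ext x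
    rcases x with ⟨x, hx⟩
    rw [Submodule.mem_bot] at hx
    simpa using hx
  rw [submoduleFrobPow, h, LinearMap.lTensor_zero, LinearMap.range_zero]

lemma frob_tmul_smul {N : Type v} [AddCommGroup N] [Module R N] (e : ℕ) (a r : R) (n : N) :
    (FrobAlg.mk R p e a) ⊗ₜ[R] (r • n) = (FrobAlg.mk R p e (r ^ p ^ e * a)) ⊗ₜ[R] n := by
  rw [TensorProduct.tmul_smul, TensorProduct.smul_tmul']
  congr 1

lemma frob_tmul_mul_eq_zero {N : Type v} [AddCommGroup N] [Module R N] (e : ℕ) (a b : R)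
    (n : N) (h : (FrobAlg.mk R p e a) ⊗ₜ[R] n = 0) :
    (FrobAlg.mk R p e (b * a)) ⊗ₜ[R] n = 0 := by
  have h2 := congrArg (LinearMap.rTensor N (LinearMap.mulLeft R (FrobAlg.mk R p e b))) h
  rw [LinearMap.rTensor_tmul, LinearMap.mulLeft_apply, map_zero] at h2
  exact h2

lemma frob_tmul_incl_eq_zero {M : Type v} [AddCommGroup M] [Module R M]
    {N₁ N₂ : Submodule R M} (h : N₁ ≤ N₂) (e : ℕ) (c : R) (y : N₁)
    (hy : (FrobAlg.mk R p e c) ⊗ₜ[R] y = 0) :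
    (FrobAlg.mk R p e c) ⊗ₜ[R] (Submodule.inclusion h y) = 0 := by
  have h2 := congrArg (LinearMap.lTensor (FrobAlg R p e) (Submodule.inclusion h)) hy
  rw [LinearMap.lTensor_tmul, map_zero] at h2
  exact h2

end Helpers

/-- Let `R` be a Noetherian ring of prime characteristic `p` possessing
a test element, `M` an `R`-module, `I = (x_1, …, x_k)` an ideal, `z ∈ I*` and `m ∈ M`
with `x_i m ∈ 0*fg_M` for all `i`.  Then `z m ∈ 0*fg_M`; equivalently,
`(0*fg_M :_M I*) = (0*fg_M :_M I)` for every ideal `I`. -/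
theorem colon_finitistic_tight_closure_eq
    (R : Type u) [CommRing R] [IsNoetherianRing R]
    (p : ℕ) [Fact p.Prime] [CharP R p]
    (htest : ∃ c : R, IsModuleTestElement R p c)
    (M : Type v) [AddCommGroup M] [Module R M] :
    (∀ (k : ℕ) (x : Fin k → R) (z : R) (m : M),
        z ∈ idealTC R p (Ideal.span (Set.range x)) →
        (∀ i : Fin k, x i • m ∈ finitisticTC R p (⊥ : Submodule R M)) →
        z • m ∈ finitisticTC R p (⊥ : Submodule R M)) ∧
    (∀ I : Ideal R,
        {m : M | ∀ z ∈ idealTC R p I, z • m ∈ finitisticTC R p (⊥ : Submodule R M)} =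
        {m : M | ∀ a ∈ I, a • m ∈ finitisticTC R p (⊥ : Submodule R M)}) := by
  classical
  haveI : ExpChar R p := ExpChar.prime Fact.out
  have part1 : ∀ (k : ℕ) (x : Fin k → R) (z : R) (m : M),
      z ∈ idealTC R p (Ideal.span (Set.range x)) →
      (∀ i : Fin k, x i • m ∈ finitisticTC R p (⊥ : Submodule R M)) →
      z • m ∈ finitisticTC R p (⊥ : Submodule R M) := by
    intro k x z m hz hxm
    obtain ⟨d, hd, e₁, hd1⟩ := hz
    have hext : ∀ i, ∃ N : Submodule R M, N.FG ∧ ∃ y : N,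
        y ∈ moduleTC R p ((⊥ : Submodule R M).comap N.subtype) ∧ (y : M) = x i • m := by
      intro i
      rcases Set.mem_iUnion.mp (hxm i) with ⟨N, hN⟩
      rcases Set.mem_iUnion.mp hN with ⟨hFG, hmem⟩
      rcases hmem with ⟨y, hy, hval⟩
      exact ⟨N, hFG, y, hy, hval⟩
    choose Mi hFGi yi hyi hval using hext
    simp only [Submodule.comap_bot, Submodule.ker_subtype] at hyi
    choose ci hci ei hei using hyi
    set M' : Submodule R M := (⨆ i, Mi i) ⊔ Submodule.span R {m} with hM'
    have hFG' : M'.FG :=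
      Submodule.FG.sup (Submodule.fg_iSup Mi hFGi) (Submodule.fg_span (Set.finite_singleton m))
    have hmm : m ∈ M' := Submodule.mem_sup_right (Submodule.mem_span_singleton_self m)
    have hMi : ∀ i, Mi i ≤ M' := fun i => le_trans (le_iSup Mi i) le_sup_left
    set m' : M' := ⟨m, hmm⟩ with hm'def
    rw [finitisticTC]
    refine Set.mem_iUnion.mpr ⟨M', Set.mem_iUnion.mpr ⟨hFG', ⟨z • m', ?_, rfl⟩⟩⟩
    rw [Submodule.comap_bot, Submodule.ker_subtype]
    refine ⟨(∏ i, ci i) * d, Ro_mul (Ro_prod Finset.univ ci fun i _ => hci i) hd,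
      max e₁ (Finset.univ.sup ei), fun e he => ?_⟩
    rw [submoduleFrobPow_bot, Submodule.mem_bot]
    have he₁ : e₁ ≤ e := le_trans (le_max_left _ _) he
    have hee : ∀ i, ei i ≤ e :=
      fun i => le_trans (Finset.le_sup (Finset.mem_univ i)) (le_trans (le_max_right _ _) he)
    -- each x i ^ q * ci i kills m'
    have hkill : ∀ i : Fin k, (FrobAlg.mk R p e (x i ^ p ^ e * ci i)) ⊗ₜ[R] m' = 0 := by
      intro i
      have h0 : (FrobAlg.mk R p e (ci i)) ⊗ₜ[R] (yi i) = 0 := by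
        have := hei i e (hee i)
        rwa [submoduleFrobPow_bot, Submodule.mem_bot] at this
      have h1 := frob_tmul_incl_eq_zero (hMi i) e (ci i) (yi i) h0
      have h2 : Submodule.inclusion (hMi i) (yi i) = x i • m' := by
        apply Subtype.ext
        simpa using hval i
      rw [h2, frob_tmul_smul] at h1
      exact h1
    -- obtain the coefficients
    obtain ⟨a, ha⟩ := (Submodule.mem_span_range_iff_exists_fun R).mp
      (frobeniusPower_span_le x e (hd1 e he₁))
    -- the ring identity
    have hid : z ^ p ^ e * ((∏ i, ci i) * d) =
        ∑ i, (a i * ∏ j ∈ Finset.univ.erase i, ci j) * (x i ^ p ^ e * ci i) := by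
      have h1 : z ^ p ^ e * ((∏ i, ci i) * d) = (∏ i, ci i) * (d * z ^ p ^ e) := by ring
      have h2 : d * z ^ p ^ e = ∑ i, a i * x i ^ p ^ e := by
        rw [← ha]; simp [smul_eq_mul]
      rw [h1, h2, Finset.mul_sum]
      refine Finset.sum_congr rfl fun i _ => ?_
      rw [← Finset.mul_prod_erase Finset.univ ci (Finset.mem_univ i)]
      ring
    rw [frob_tmul_smul, hid]
    have hsum : (FrobAlg.mk R p e (∑ i, (a i * ∏ j ∈ Finset.univ.erase i, ci j) *
        (x i ^ p ^ e * ci i))) ⊗ₜ[R] m' =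
        ∑ i, (FrobAlg.mk R p e ((a i * ∏ j ∈ Finset.univ.erase i, ci j) *
          (x i ^ p ^ e * ci i))) ⊗ₜ[R] m' := by
      show (∑ i, (FrobAlg.mk R p e ((a i * ∏ j ∈ Finset.univ.erase i, ci j) *
          (x i ^ p ^ e * ci i)))) ⊗ₜ[R] m' = _
      exact TensorProduct.sum_tmul _ _ _
    rw [hsum]
    exact Finset.sum_eq_zero fun i _ =>
      frob_tmul_mul_eq_zero e _ _ m' (hkill i)
  refine ⟨part1, fun I => ?_⟩
  ext m
  simp only [Set.mem_setOf_eq]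
  constructor
  · intro h a ha
    refine h a ⟨1, Ro_one, 0, fun e _ => ?_⟩
    rw [one_mul]
    exact Ideal.subset_span ⟨a, ha, rfl⟩
  · intro h z hz
    obtain ⟨n, f, hf⟩ := Submodule.fg_iff_exists_fin_generating_family.mp
      (IsNoetherian.noetherian I)
    rw [Ideal.submodule_span_eq] at hf
    refine part1 n f z m (by rwa [hf]) fun i => h (f i) ?_
    rw [← hf]
    exact Ideal.subset_span ⟨i, rfl⟩
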